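/- arXiv:math-ph/0606019 — 4 statements merged into one kernel-verified Lean document; each statement's English description precedes it below -/
import Mathlib

section
/- If ŵ is an invertible formal series ŵ = I + ∑_{k≥1} w_k z^{-k} (w_k matrix functions on ℤ) satisfying the dressing relation L_D·ŵ = (Λŵ)·(Δ - zA), then for each α the matrix R_α := ŵ·E_α·ŵ^{-1} satisfies [R_α, L_D]_D = 0, i.e. R_α is a resolvent of L_D. -/
/-- If `ŵ` is invertible and satisfies the dressing relation
`L_D·ŵ = (Λŵ)·(Δ - zA)`, then `R_α = ŵ·E_α·ŵ⁻¹` satisfies `[R_α, L_D]_D = 0`,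
i.e. `R_α` is a resolvent of `L_D`.  Here operators are `m×m` matrices over a
ring `S` of scalar operators, `Λ₀ : S →+* S` is the shift (acting entrywise on
matrices via `mapMatrix`), the diagonal matrix `Matrix.diagonal v` plays the role
of `Δ - zA` (diagonal since `A` is diagonal and `Δ` scalar), and
`E_α = stdBasisMatrix α α 1`. -/
theorem dressed_is_resolvent (m : ℕ) (S : Type*) [Ring S] (Λ₀ : S →+* S)
    (v : Fin m → S) (L w winv : Matrix (Fin m) (Fin m) S)
    (hw : w * winv = 1) (hw' : winv * w = 1)
    (hdress : L * w = Λ₀.mapMatrix w * Matrix.diagonal v) (α : Fin m) :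
    Λ₀.mapMatrix (w * Matrix.single α α 1 * winv) * L =
      L * (w * Matrix.single α α 1 * winv) := by
  set E := Matrix.single α α (1 : S) with hE
  -- the shift fixes E
  have hmapE : Λ₀.mapMatrix E = E := by
    ext i j
    by_cases h : α = i ∧ α = j <;>
      simp [hE, Matrix.single, Matrix.map_apply, h]
  -- E commutes with the diagonal matrix
  have hcomm : E * Matrix.diagonal v = Matrix.diagonal v * E := by
    ext i j
    by_cases hi : α = i <;> by_cases hj : α = j <;>
      simp [hE, Matrix.mul_apply, Matrix.diagonal_apply, Matrix.single,
        ite_and, Finset.sum_ite_eq, Finset.sum_ite_eq', hi, hj, eq_comm] <;>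
      split_ifs with h <;> simp_all
  -- L = Λw * D * winv
  have hL : L = Λ₀.mapMatrix w * Matrix.diagonal v * winv := by
    calc L = L * w * winv := by rw [mul_assoc, hw, mul_one]
    _ = Λ₀.mapMatrix w * Matrix.diagonal v * winv := by rw [hdress]
  -- Λ(winv) * Λ(w) = 1
  have hw'' : Λ₀.mapMatrix winv * Λ₀.mapMatrix w = 1 := by
    rw [← map_mul, hw', map_one]
  simp only [map_mul, hmapE, hL, mul_assoc]
  rw [← mul_assoc (Λ₀.mapMatrix winv) (Λ₀.mapMatrix w), hw'', one_mul,
    ← mul_assoc winv w, hw', one_mul, ← mul_assoc E (Matrix.diagonal v), hcomm,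
    mul_assoc]
end

section
/- If the Baker function w_D = ŵ · g(n;t,z) satisfies ∂_{kα} ŵ = -B̄_{kα} ŵ and the dressing relation, then L_D(w_D) = 0 and ∂_{kα}(w_D) = B_{kα} w_D. -/
/-- Baker function equations.  Operators form a ring `S` acting on a module `M` of
(matrix-valued) functions; `Λ : S →+* S` is the shift, `d : S →+ S` the time
derivative `∂_{kα}` on operators and `dM : M →+ M` the one on functions, compatible
via the Leibniz rule `dM (b • x) = d b • x + b • dM x`.  Suppose `ŵ = w` is
invertible with inverse `winv` and satisfies the evolution `d w = -B̄·w`;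
`B + B̄ = ζ·(w·E·w⁻¹)` is the splitting of `z^k R_α` (`ζ` the central scalar
`z^k`, `E = E_α`); and `g` satisfies `(Δ - zA)(g) = D • g = 0` and
`∂_{kα} g = z^k E_α g = (ζ·E) • g`.  Then the Baker function `w_D = ŵ • g`
satisfies `L_D(w_D) = 0` (with `L_D = (Λŵ)·D·ŵ⁻¹`) and `∂_{kα} w_D = B_{kα} w_D`. -/
theorem baker_function_equations (S M : Type*) [Ring S] [AddCommGroup M]
    [Module S M] (Λ : S →+* S) (d : S →+ S) (dM : M →+ M)
    (hLeibM : ∀ (b : S) (x : M), dM (b • x) = d b • x + b • dM x)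
    (w winv D E B Bb ζ : S) (g : M)
    (hw : w * winv = 1) (hw' : winv * w = 1)
    (hdw : d w = -(Bb * w))
    (hBB : B + Bb = ζ * (w * E * winv))
    (hζw : ζ * w = w * ζ)
    (hgD : D • g = 0)
    (hgt : dM g = (ζ * E) • g) :
    (Λ w * D * winv) • (w • g) = 0 ∧ dM (w • g) = B • (w • g) := by
  constructor
  · have : (Λ w * D * winv) • (w • g) = (Λ w) • (D • g) := by
      rw [← smul_smul, ← smul_smul, smul_smul winv w g, hw', one_smul]
    rw [this, hgD, smul_zero]
  · have hBw : B * w = ζ * (w * E) - Bb * w := by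
      have h : (B + Bb) * w = ζ * (w * E) := by
        rw [hBB, mul_assoc, mul_assoc, hw', mul_one]
      rw [eq_sub_iff_add_eq, ← add_mul, h]
    have hwζ : w * (ζ * E) = ζ * (w * E) := by
      rw [← mul_assoc, ← hζw, mul_assoc]
    rw [hLeibM, hdw, hgt, smul_smul, smul_smul, hBw, sub_smul, neg_smul, hwζ]
    abel
end

section
/- If the Baker function w_D satisfies L_D(w_D) = 0 and ∂_{kα} w_D = B_{kα} w_D, then the bilinear identity res_z [ z^l (Δ^m ∂^{[λ]} w_D) · w_D^{-1} ] = 0 holds for all l ≥ 0, m ∈ {0,1}, and all multi-indices [λ] of time derivatives. -/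
/-- Bilinear identity (part I) for the discrete AKNS-D hierarchy.  Work in an
abstract ring `S` of formal (matrix) Laurent-type series in `z`, with:
`P` the subring of series containing only non-negative powers of `z`; the shift
`Λ` (a ring endomorphism preserving `P`), so `Δ x = Λ x - x`; a family `der i` of
time derivatives `∂_{kα}` (additive, Leibniz, preserving `P`); a central element
`z ∈ P`; and an additive residue map `res` vanishing on `z^l·P` for all `l ≥ 0`
(`res` extracts the coefficient of `z^{-1}`).  Suppose the Baker function `w_D`
is invertible with inverse `winv`, satisfies `L_D(w_D) = 0` in the form
`Δ w_D = (zA - U)·w_D` with `zA - U ∈ P`, and satisfies the evolution equations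
`∂_{kα} w_D = B_{kα}·w_D` with each `B_{kα} ∈ P`.  Then
`res(z^l · (Δ^m ∂^{[λ]} w_D) · w_D⁻¹) = 0` for all `l ≥ 0`, `m ∈ {0,1}`, and all
multi-indices `[λ]` of time derivatives. -/
theorem discrete_bilinear_identity (S W : Type*) [Ring S] [AddCommGroup W]
    {ι : Type*} (P : Subring S) (Λ : S →+* S) (hΛP : ∀ p ∈ P, Λ p ∈ P)
    (der : ι → S →+ S)
    (hLeib : ∀ i (x y : S), der i (x * y) = der i x * y + x * der i y)
    (hderP : ∀ i, ∀ p ∈ P, der i p ∈ P)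
    (z : S) (hz : z ∈ P) (hzc : ∀ x : S, z * x = x * z)
    (res : S →+ W) (hres : ∀ l : ℕ, ∀ q ∈ P, res (z ^ l * q) = 0)
    (wD winv zAU : S) (hw : wD * winv = 1) (hw' : winv * wD = 1)
    (hzAU : zAU ∈ P) (hΔ : Λ wD - wD = zAU * wD)
    (hB : ∀ i, ∃ b ∈ P, der i wD = b * wD) :
    ∀ (l m : ℕ), m ≤ 1 → ∀ lam : List ι,
      res (z ^ l *
          (fun x => Λ x - x)^[m] (lam.foldr (fun i x => der i x) wD) * winv) = 0 := by
  -- Step 1: ∂^[λ] wD = p * wD with p ∈ P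
  have key : ∀ lam : List ι, ∃ p ∈ P, lam.foldr (fun i x => der i x) wD = p * wD := by
    intro lam
    induction lam with
    | nil => exact ⟨1, P.one_mem, (one_mul wD).symm⟩
    | cons i t ih =>
      obtain ⟨p, hp, hpe⟩ := ih
      obtain ⟨b, hb, hbe⟩ := hB i
      refine ⟨der i p + p * b, P.add_mem (hderP i p hp) (P.mul_mem hp hb), ?_⟩
      simp only [List.foldr_cons, hpe, hLeib, hbe, add_mul, mul_assoc]
  intro l m hm lam
  obtain ⟨p, hp, hpe⟩ := key lam
  -- Step 2: Δ^m (p*wD) = q * wD with q ∈ P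
  have step2 : ∃ q ∈ P, (fun x => Λ x - x)^[m] (lam.foldr (fun i x => der i x) wD)
      = q * wD := by
    interval_cases m
    · exact ⟨p, hp, hpe⟩
    · refine ⟨Λ p * (1 + zAU) - p, P.sub_mem (P.mul_mem (hΛP p hp)
        (P.add_mem P.one_mem hzAU)) hp, ?_⟩
      have hΛw : Λ wD = (1 + zAU) * wD := by
        rw [add_mul, one_mul, eq_add_of_sub_eq hΔ, add_comm]
      simp only [Function.iterate_one, hpe, map_mul, hΛw, sub_mul, mul_assoc]
  obtain ⟨q, hq, hqe⟩ := step2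
  rw [hqe, mul_assoc, mul_assoc, hw, mul_one]
  exact hres l q hq
end

section
/- Suppose w_D = (I + ∑_{k≥1} w_k z^{-k}) g(n;t,z) and w_D* = (I + ∑_{k≥1} w*_k z^{-k}) g(-n;-t,z) satisfy res_z{ z^l w_D · (w_D*)^T } = 0 for all l ≥ 0. Then w_D^{-1} = (w_D*)^T. -/
noncomputable section

/-- Entrywise transpose of a matrix-valued power series. -/
def transposePS (m : ℕ) (K : Type*) [CommRing K]
    (F : PowerSeries (Matrix (Fin m) (Fin m) K)) :
    PowerSeries (Matrix (Fin m) (Fin m) K) :=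
  PowerSeries.mk fun k => (PowerSeries.coeff k F).transpose

/-- Bilinear identity (part II, first conclusion).  The Baker functions are
`w_D = ŵ·g(n;t,z)` and `w_D* = ŵ*·g(-n;-t,z)`, where `ŵ = I + ∑_{k≥1} w_k z^{-k}`
and `ŵ* = I + ∑_{k≥1} w*_k z^{-k}` are matrix-valued power series in `z⁻¹` with
constant coefficient `I`.  They live in an ambient operator ring `B`, into which
series in `z⁻¹` embed via a ring embedding `φ` (`φ F` is `F` evaluated at `z⁻¹`),
with the residue map `res` satisfying `res(z^l · φ F) = coeff_{l+1} F` (the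
coefficient of `z^{-1}`).  The exponential factors satisfy
`g(n;t,z)·g(-n;-t,z)ᵀ = 1` (`g` is diagonal).  If
`res_z{z^l · w_D·(w_D*)ᵀ} = 0` for all `l ≥ 0`, then `w_D⁻¹ = (w_D*)ᵀ`, i.e.
`w_D·(w_D*)ᵀ = 1 = (w_D*)ᵀ·w_D`. -/
theorem bilinear_implies_inverse (m : ℕ) (K : Type*) [CommRing K]
    (B : Type*) [Ring B]
    (φ : PowerSeries (Matrix (Fin m) (Fin m) K) →+* B) (hφ : Function.Injective φ)
    (z g₁ g₂ : B) (hg : g₁ * g₂ = 1) (hg' : g₂ * g₁ = 1)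
    (res : B →+ Matrix (Fin m) (Fin m) K)
    (hres : ∀ (l : ℕ) (F : PowerSeries (Matrix (Fin m) (Fin m) K)),
      res (z ^ l * φ F) = PowerSeries.coeff (l + 1) F)
    (W Ws : PowerSeries (Matrix (Fin m) (Fin m) K))
    (hW : PowerSeries.constantCoeff W = 1)
    (hWs : PowerSeries.constantCoeff Ws = 1)
    (hbil : ∀ l : ℕ,
      res (z ^ l * (φ W * g₁ * (g₂ * φ (transposePS m K Ws)))) = 0) :
    (φ W * g₁) * (g₂ * φ (transposePS m K Ws)) = 1 ∧
      (g₂ * φ (transposePS m K Ws)) * (φ W * g₁) = 1 := by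
  set T := transposePS m K Ws with hT
  -- regroup: w_D (w_D*)ᵀ = φ(W*T)
  have hgroup : φ W * g₁ * (g₂ * φ T) = φ (W * T) := by
    rw [map_mul]
    calc φ W * g₁ * (g₂ * φ T) = φ W * (g₁ * g₂) * φ T := by simp [mul_assoc]
    _ = φ W * φ T := by rw [hg, mul_one]
  -- all positive-index coefficients of W*T vanish
  have hcoeff : ∀ l : ℕ, PowerSeries.coeff (l + 1) (W * T) = 0 := by
    intro l
    have := hbil l
    rw [hgroup, hres] at this
    exact this
  -- constant coefficient of W*T is 1
  have hT0 : PowerSeries.constantCoeff T = 1 := by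
    have : PowerSeries.constantCoeff T
        = (PowerSeries.constantCoeff Ws).transpose := by
      simp [hT, transposePS, ← PowerSeries.coeff_zero_eq_constantCoeff]
    rw [this, hWs, Matrix.transpose_one]
  have hWT : W * T = 1 := by
    ext n
    cases n with
    | zero =>
      simp only [PowerSeries.coeff_zero_eq_constantCoeff, map_mul, hW, hT0,
        one_mul, map_one]
    | succ k =>
      rw [hcoeff k]
      simp [PowerSeries.coeff_one]
  -- W is a unit, so T is its two-sided inverse
  have hTW : T * W = 1 := by
    have hWu : PowerSeries.constantCoeff W = ((1 : (Matrix (Fin m) (Fin m) K)ˣ) : Matrix (Fin m) (Fin m) K) := by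
      simpa using hW
    have h1 : W * PowerSeries.invOfUnit W 1 = 1 := PowerSeries.mul_invOfUnit W 1 hWu
    have h2 : PowerSeries.invOfUnit W 1 * W = 1 := PowerSeries.invOfUnit_mul W 1 hWu
    have hTe : T = PowerSeries.invOfUnit W 1 := by
      calc T = 1 * T := (one_mul T).symm
      _ = (PowerSeries.invOfUnit W 1 * W) * T := by rw [h2]
      _ = PowerSeries.invOfUnit W 1 * (W * T) := by rw [mul_assoc]
      _ = PowerSeries.invOfUnit W 1 := by rw [hWT, mul_one]
    rw [hTe]; exact h2
  constructor
  · rw [hgroup, hWT, map_one]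
  · have : g₂ * φ T * (φ W * g₁) = g₂ * φ (T * W) * g₁ := by
      rw [map_mul]; simp [mul_assoc]
    rw [this, hTW, map_one, mul_one, hg']
end
end
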